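/- arXiv:1110.3036 — 5 statements merged into one kernel-verified Lean document; each statement's English description precedes it below -/
import Mathlib

section
/- Let μ, ν be Borel probability measures on ℝ^d with finite second moments and mean 0. The product coupling μ × ν is an optimal coupling for the L²-Wasserstein distance (i.e., W₂(μ,ν)² = ∫∫|x-y|² dμ(x)dν(y)) if and only if W₂(μ,ν)² = W₂(δ_0,μ)² + W₂(δ_0,ν)². -/
open MeasureTheory Real ENNReal

noncomputable section

abbrev Euc (d : ℕ) := EuclideanSpace ℝ (Fin d)

/-- Topological support of a measure. -/
def msupp {α : Type*} [TopologicalSpace α] [MeasurableSpace α] (μ : Measure α) : Set α :=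
  {x | ∀ U : Set α, IsOpen U → x ∈ U → 0 < μ U}

/-- Couplings of two measures. -/
def Couplings {α : Type*} [MeasurableSpace α] (μ ν : Measure α) : Set (Measure (α × α)) :=
  {σ | σ.map Prod.fst = μ ∧ σ.map Prod.snd = ν}

/-- Squared L²-Wasserstein distance. -/
def W2sq {α : Type*} [MeasurableSpace α] [NormedAddCommGroup α] (μ ν : Measure α) : ℝ≥0∞ :=
  ⨅ σ ∈ Couplings μ ν, ∫⁻ p : α × α, ENNReal.ofReal (‖p.1 - p.2‖ ^ 2) ∂σ

theorem stmt3 {d : ℕ} (μ ν : Measure (Euc d)) [IsProbabilityMeasure μ] [IsProbabilityMeasure ν]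
    (hμ : Integrable (fun x => ‖x‖ ^ 2) μ) (hν : Integrable (fun y => ‖y‖ ^ 2) ν)
    (hmμ : ∫ x, x ∂μ = 0) (hmν : ∫ y, y ∂ν = 0) :
    (∫⁻ p : Euc d × Euc d, ENNReal.ofReal (‖p.1 - p.2‖ ^ 2) ∂(μ.prod ν)) = W2sq μ ν ↔
      W2sq μ ν = ENNReal.ofReal ((∫ x, ‖x‖ ^ 2 ∂μ) + ∫ y, ‖y‖ ^ 2 ∂ν) := by
  -- integrability of the pieces on the product
  have h1 : Integrable (fun p : Euc d × Euc d => ‖p.1‖ ^ 2) (μ.prod ν) := by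
    simpa using hμ.mul_prod (integrable_const (1 : ℝ))
  have h2 : Integrable (fun p : Euc d × Euc d => ‖p.2‖ ^ 2) (μ.prod ν) := by
    simpa using (integrable_const (1 : ℝ)).mul_prod hν
  have hcross : Integrable (fun p : Euc d × Euc d => (inner ℝ p.1 p.2 : ℝ)) (μ.prod ν) := by
    refine Integrable.mono' (h1.add h2) ?_ ?_
    · exact (Continuous.inner continuous_fst continuous_snd).aestronglyMeasurable
    · filter_upwards with p
      calc ‖(inner ℝ p.1 p.2 : ℝ)‖ ≤ ‖p.1‖ * ‖p.2‖ := norm_inner_le_norm _ _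
        _ ≤ ‖p.1‖ ^ 2 + ‖p.2‖ ^ 2 := by nlinarith [two_mul_le_add_sq ‖p.1‖ ‖p.2‖]
  have hid : Integrable (fun y : Euc d => y) ν := by
    refine Integrable.mono' (hν.add (integrable_const (1 : ℝ)))
      aestronglyMeasurable_id ?_
    filter_upwards with y
    simp only [Pi.add_apply]
    nlinarith [sq_nonneg (‖y‖ - 1)]
  have hf : Integrable (fun p : Euc d × Euc d => ‖p.1 - p.2‖ ^ 2) (μ.prod ν) := by
    have : (fun p : Euc d × Euc d => ‖p.1 - p.2‖ ^ 2)
        = fun p : Euc d × Euc d => ‖p.1‖ ^ 2 - 2 * (inner ℝ p.1 p.2 : ℝ) + ‖p.2‖ ^ 2 := by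
      funext p; exact norm_sub_sq_real p.1 p.2
    rw [this]
    exact (h1.sub (hcross.const_mul 2)).add h2
  -- the cross term vanishes
  have hcross0 : ∫ p : Euc d × Euc d, (inner ℝ p.1 p.2 : ℝ) ∂(μ.prod ν) = 0 := by
    rw [MeasureTheory.integral_prod _ hcross]
    have h0 : ∀ x : Euc d, ∫ y, (inner ℝ x y : ℝ) ∂ν = 0 := by
      intro x
      have := (innerSL ℝ x).integral_comp_comm hid
      simpa [hmν] using this
    simp only [h0, integral_zero]
  -- the integral of ‖x-y‖² over the product
  have hInt : ∫ p : Euc d × Euc d, ‖p.1 - p.2‖ ^ 2 ∂(μ.prod ν)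
      = (∫ x, ‖x‖ ^ 2 ∂μ) + ∫ y, ‖y‖ ^ 2 ∂ν := by
    have heq : (fun p : Euc d × Euc d => ‖p.1 - p.2‖ ^ 2)
        = fun p : Euc d × Euc d => ‖p.1‖ ^ 2 - 2 * (inner ℝ p.1 p.2 : ℝ) + ‖p.2‖ ^ 2 := by
      funext p; exact norm_sub_sq_real p.1 p.2
    have hsub : Integrable (fun p : Euc d × Euc d => ‖p.1‖ ^ 2 - 2 * (inner ℝ p.1 p.2 : ℝ))
        (μ.prod ν) := h1.sub (hcross.const_mul 2)
    have hcm : Integrable (fun p : Euc d × Euc d => 2 * (inner ℝ p.1 p.2 : ℝ)) (μ.prod ν) :=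
      hcross.const_mul 2
    rw [heq, integral_add hsub h2,
      integral_sub h1 hcm, integral_const_mul, hcross0,
      MeasureTheory.integral_fun_fst (f := fun x : Euc d => ‖x‖ ^ 2),
      MeasureTheory.integral_fun_snd (f := fun y : Euc d => ‖y‖ ^ 2)]
    simp
  have hlin : (∫⁻ p : Euc d × Euc d, ENNReal.ofReal (‖p.1 - p.2‖ ^ 2) ∂(μ.prod ν))
      = ENNReal.ofReal ((∫ x, ‖x‖ ^ 2 ∂μ) + ∫ y, ‖y‖ ^ 2 ∂ν) := by
    rw [← hInt, ← MeasureTheory.ofReal_integral_eq_lintegral_ofReal hf]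
    filter_upwards with p
    positivity
  rw [hlin]
  exact eq_comm

end
end

section
/- Let μ, ν be Borel probability measures on ℝ^d with finite second moments, neither equal to δ_0, and let θ(μ,ν) ∈ [0,π/2] be the smallest principal angle between span(supp(μ)) and span(supp(ν)), defined by cos θ(μ,ν) = max{ ⟨x,y⟩/(|x||y|) : 0 ≠ x ∈ span(supp(μ)), 0 ≠ y ∈ span(supp(ν)) } (taking θ = π/2 when the max of the cosine is ≤ 0). Then W₂(μ,ν)² ≥ W₂(δ_0,μ)² + W₂(δ_0,ν)² - 2 cos(θ(μ,ν)) · W₂(δ_0,μ) · W₂(δ_0,ν). -/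
open MeasureTheory Real ENNReal

noncomputable section

/-- a.e. every point lies in the support. -/
lemma aux_msupp_ae {α : Type*} [TopologicalSpace α] [MeasurableSpace α]
    [SecondCountableTopology α]
    (μ : Measure α) : ∀ᵐ x ∂μ, x ∈ msupp μ := by
  obtain ⟨T, hTc, hTsub, hTeq⟩ := TopologicalSpace.isOpen_sUnion_countable
    {U : Set α | IsOpen U ∧ μ U = 0} (fun s hs => hs.1)
  have hnull : μ (⋃₀ {U : Set α | IsOpen U ∧ μ U = 0}) = 0 := by
    rw [← hTeq, Set.sUnion_eq_biUnion]
    exact (measure_biUnion_null_iff hTc).mpr fun s hs => (hTsub hs).2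
  rw [ae_iff]
  refine measure_mono_null (fun x hx => ?_) hnull
  simp only [msupp, Set.mem_setOf_eq] at hx
  push_neg at hx
  obtain ⟨U, hUo, hxU, hU0⟩ := hx
  exact ⟨U, ⟨hUo, le_antisymm hU0 (by positivity)⟩, hxU⟩

/-- Cauchy–Schwarz for integrals of nonnegative functions. -/
lemma aux_cs {α : Type*} [MeasurableSpace α] {σ : Measure α} {f g : α → ℝ}
    (hf0 : ∀ a, 0 ≤ f a) (hg0 : ∀ a, 0 ≤ g a)
    (hfm : AEStronglyMeasurable f σ) (hgm : AEStronglyMeasurable g σ)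
    (hf : Integrable (fun a => f a ^ 2) σ) (hg : Integrable (fun a => g a ^ 2) σ) :
    ∫ a, f a * g a ∂σ ≤ Real.sqrt (∫ a, f a ^ 2 ∂σ) * Real.sqrt (∫ a, g a ^ 2 ∂σ) := by
  have h2 : (2 : ℝ).HolderConjugate 2 := by rw [Real.holderConjugate_iff]; norm_num
  have hfL : MemLp f (ENNReal.ofReal 2) σ := by
    rw [show ENNReal.ofReal (2 : ℝ) = 2 from by norm_num]
    exact (memLp_two_iff_integrable_sq hfm).mpr hf
  have hgL : MemLp g (ENNReal.ofReal 2) σ := by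
    rw [show ENNReal.ofReal (2 : ℝ) = 2 from by norm_num]
    exact (memLp_two_iff_integrable_sq hgm).mpr hg
  have h := MeasureTheory.integral_mul_le_Lp_mul_Lq_of_nonneg h2
    (Filter.Eventually.of_forall hf0) (Filter.Eventually.of_forall hg0) hfL hgL
  have e1 : ∀ x : ℝ, x ^ (2 : ℝ) = x ^ 2 := fun x => by
    rw [show (2 : ℝ) = ((2 : ℕ) : ℝ) by norm_num, Real.rpow_natCast]
  simpa only [e1, ← Real.sqrt_eq_rpow] using h

theorem stmt8 {d : ℕ} (μ ν : Measure (Euc d)) [IsProbabilityMeasure μ] [IsProbabilityMeasure ν]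
    (hμ : Integrable (fun x => ‖x‖ ^ 2) μ) (hν : Integrable (fun y => ‖y‖ ^ 2) ν)
    (hμ0 : μ ≠ Measure.dirac 0) (hν0 : ν ≠ Measure.dirac 0)
    (θ : ℝ) (hθ : θ ∈ Set.Icc 0 (π / 2))
    (hcos : Real.cos θ = max 0 (sSup {r : ℝ | ∃ x ∈ Submodule.span ℝ (msupp μ),
      ∃ y ∈ Submodule.span ℝ (msupp ν), x ≠ 0 ∧ y ≠ 0 ∧ r = inner ℝ x y / (‖x‖ * ‖y‖)})) :
    (W2sq μ ν).toReal ≥ (∫ x, ‖x‖ ^ 2 ∂μ) + (∫ y, ‖y‖ ^ 2 ∂ν)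
      - 2 * Real.cos θ * Real.sqrt (∫ x, ‖x‖ ^ 2 ∂μ) * Real.sqrt (∫ y, ‖y‖ ^ 2 ∂ν) := by
  classical
  set S : Set ℝ := {r : ℝ | ∃ x ∈ Submodule.span ℝ (msupp μ),
      ∃ y ∈ Submodule.span ℝ (msupp ν), x ≠ 0 ∧ y ≠ 0 ∧ r = inner ℝ x y / (‖x‖ * ‖y‖)} with hSdef
  set A := ∫ x, ‖x‖ ^ 2 ∂μ with hAdef
  set B := ∫ y, ‖y‖ ^ 2 ∂ν with hBdef
  have hcos0 : 0 ≤ Real.cos θ := by rw [hcos]; exact le_max_left _ _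
  have hcos1 : Real.cos θ ≤ 1 := Real.cos_le_one θ
  -- the set S is bounded above by 1 (Cauchy–Schwarz)
  have hSbdd : BddAbove S := by
    refine ⟨1, fun r hr => ?_⟩
    obtain ⟨x, -, y, -, hx0, hy0, rfl⟩ := hr
    exact (abs_le.mp (abs_real_inner_div_norm_mul_norm_le_one x y)).2
  -- pointwise inner product bound on the spans
  have hinner : ∀ x ∈ Submodule.span ℝ (msupp μ), ∀ y ∈ Submodule.span ℝ (msupp ν),
      (inner ℝ x y : ℝ) ≤ Real.cos θ * (‖x‖ * ‖y‖) := by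
    intro x hx y hy
    by_cases hx0 : x = 0
    · simp [hx0]
    by_cases hy0 : y = 0
    · simp [hy0]
    have hxn : (0:ℝ) < ‖x‖ := norm_pos_iff.mpr hx0
    have hyn : (0:ℝ) < ‖y‖ := norm_pos_iff.mpr hy0
    have hxy : (0:ℝ) < ‖x‖ * ‖y‖ := mul_pos hxn hyn
    have hmem : (inner ℝ x y : ℝ) / (‖x‖ * ‖y‖) ∈ S := ⟨x, hx, y, hy, hx0, hy0, rfl⟩
    have h1 : (inner ℝ x y : ℝ) / (‖x‖ * ‖y‖) ≤ sSup S := le_csSup hSbdd hmem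
    have h2 : sSup S ≤ Real.cos θ := by rw [hcos]; exact le_max_right _ _
    have h3 := (div_le_iff₀ hxy).mp (h1.trans h2)
    linarith
  have contn1 : Continuous fun p : Euc d × Euc d => ‖p.1‖ := continuous_norm.comp continuous_fst
  have contn2 : Continuous fun p : Euc d × Euc d => ‖p.2‖ := continuous_norm.comp continuous_snd
  have contsq : Continuous fun x : Euc d => ‖x‖ ^ 2 := continuous_norm.pow 2
  -- a.e. support facts
  have hmeasμ : MeasurableSet {x : Euc d | x ∈ Submodule.span ℝ (msupp μ)} :=
    (Submodule.closed_of_finiteDimensional (Submodule.span ℝ (msupp μ))).measurableSet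
  have hmeasν : MeasurableSet {x : Euc d | x ∈ Submodule.span ℝ (msupp ν)} :=
    (Submodule.closed_of_finiteDimensional (Submodule.span ℝ (msupp ν))).measurableSet
  have hμsupp : ∀ᵐ x ∂μ, x ∈ Submodule.span ℝ (msupp μ) :=
    (aux_msupp_ae μ).mono fun x hx => Submodule.subset_span hx
  have hνsupp : ∀ᵐ y ∂ν, y ∈ Submodule.span ℝ (msupp ν) :=
    (aux_msupp_ae ν).mono fun y hy => Submodule.subset_span hy
  -- the key bound for any coupling
  have key : ∀ σ ∈ Couplings μ ν,
      ENNReal.ofReal (A + B - 2 * Real.cos θ * Real.sqrt A * Real.sqrt B)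
        ≤ ∫⁻ p : Euc d × Euc d, ENNReal.ofReal (‖p.1 - p.2‖ ^ 2) ∂σ := by
    rintro σ ⟨hσ1, hσ2⟩
    haveI : IsProbabilityMeasure σ := by
      constructor
      have h : σ.map Prod.fst Set.univ = 1 := by rw [hσ1]; exact measure_univ
      rwa [Measure.map_apply measurable_fst MeasurableSet.univ, Set.preimage_univ] at h
    -- integrability of the marginals' squares
    have hμ' : Integrable (fun x : Euc d => ‖x‖ ^ 2) (σ.map Prod.fst) := hσ1.symm ▸ hμ
    have hν' : Integrable (fun y : Euc d => ‖y‖ ^ 2) (σ.map Prod.snd) := hσ2.symm ▸ hν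
    have hInt1 : Integrable (fun p : Euc d × Euc d => ‖p.1‖ ^ 2) σ :=
      (integrable_map_measure contsq.aestronglyMeasurable measurable_fst.aemeasurable).mp hμ'
    have hInt2 : Integrable (fun p : Euc d × Euc d => ‖p.2‖ ^ 2) σ :=
      (integrable_map_measure contsq.aestronglyMeasurable measurable_snd.aemeasurable).mp hν'
    have hI1 : ∫ p : Euc d × Euc d, ‖p.1‖ ^ 2 ∂σ = A := by
      rw [hAdef, ← hσ1, integral_map measurable_fst.aemeasurable contsq.aestronglyMeasurable]
    have hI2 : ∫ p : Euc d × Euc d, ‖p.2‖ ^ 2 ∂σ = B := by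
      rw [hBdef, ← hσ2, integral_map measurable_snd.aemeasurable contsq.aestronglyMeasurable]
    -- a.e. membership in span
    have hσ_supp1 : ∀ᵐ p : Euc d × Euc d ∂σ, p.1 ∈ Submodule.span ℝ (msupp μ) := by
      have h : ∀ᵐ x ∂(σ.map Prod.fst), x ∈ Submodule.span ℝ (msupp μ) := by
        rw [hσ1]; exact hμsupp
      exact (ae_map_iff measurable_fst.aemeasurable hmeasμ).mp h
    have hσ_supp2 : ∀ᵐ p : Euc d × Euc d ∂σ, p.2 ∈ Submodule.span ℝ (msupp ν) := by
      have h : ∀ᵐ y ∂(σ.map Prod.snd), y ∈ Submodule.span ℝ (msupp ν) := by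
        rw [hσ2]; exact hνsupp
      exact (ae_map_iff measurable_snd.aemeasurable hmeasν).mp h
    -- pointwise a.e. inequality
    have h_ae : ∀ᵐ p : Euc d × Euc d ∂σ,
        ENNReal.ofReal (‖p.1‖ ^ 2 + ‖p.2‖ ^ 2 - 2 * Real.cos θ * (‖p.1‖ * ‖p.2‖))
          ≤ ENNReal.ofReal (‖p.1 - p.2‖ ^ 2) := by
      filter_upwards [hσ_supp1, hσ_supp2] with p hp1 hp2
      apply ENNReal.ofReal_le_ofReal
      have h := hinner p.1 hp1 p.2 hp2
      have hn := norm_sub_sq_real p.1 p.2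
      nlinarith [h, hn]
    -- integrability of the product of norms
    have hsum : Integrable (fun p : Euc d × Euc d => ‖p.1‖ ^ 2 + ‖p.2‖ ^ 2) σ :=
      hInt1.add hInt2
    have hInt3 : Integrable (fun p : Euc d × Euc d => ‖p.1‖ * ‖p.2‖) σ := by
      refine hsum.mono' (contn1.mul contn2).aestronglyMeasurable ?_
      refine Filter.Eventually.of_forall fun p => ?_
      rw [Real.norm_of_nonneg (by positivity)]
      nlinarith [sq_nonneg (‖p.1‖ - ‖p.2‖), sq_nonneg ‖p.1‖, sq_nonneg ‖p.2‖]
    -- Cauchy–Schwarz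
    have hCS : ∫ p : Euc d × Euc d, ‖p.1‖ * ‖p.2‖ ∂σ ≤ Real.sqrt A * Real.sqrt B := by
      have h := aux_cs (f := fun p : Euc d × Euc d => ‖p.1‖) (g := fun p : Euc d × Euc d => ‖p.2‖)
        (fun p => norm_nonneg _) (fun p => norm_nonneg _)
        contn1.aestronglyMeasurable contn2.aestronglyMeasurable hInt1 hInt2
      rwa [hI1, hI2] at h
    -- integral lower bound
    have hIg : A + B - 2 * Real.cos θ * Real.sqrt A * Real.sqrt B
        ≤ ∫ p : Euc d × Euc d, (‖p.1‖ ^ 2 + ‖p.2‖ ^ 2 - 2 * Real.cos θ * (‖p.1‖ * ‖p.2‖)) ∂σ := by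
      rw [integral_sub hsum (hInt3.const_mul _), integral_add hInt1 hInt2,
        integral_const_mul, hI1, hI2]
      have h2 : 2 * Real.cos θ * ∫ p : Euc d × Euc d, ‖p.1‖ * ‖p.2‖ ∂σ
          ≤ 2 * Real.cos θ * (Real.sqrt A * Real.sqrt B) :=
        mul_le_mul_of_nonneg_left hCS (by linarith)
      have h3 : 2 * Real.cos θ * (Real.sqrt A * Real.sqrt B)
          = 2 * Real.cos θ * Real.sqrt A * Real.sqrt B := by ring
      linarith
    -- nonnegativity of the integrand
    have hg0 : ∀ p : Euc d × Euc d,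
        0 ≤ ‖p.1‖ ^ 2 + ‖p.2‖ ^ 2 - 2 * Real.cos θ * (‖p.1‖ * ‖p.2‖) := fun p => by
      nlinarith [sq_nonneg (‖p.1‖ - ‖p.2‖),
        mul_nonneg (by linarith : (0:ℝ) ≤ 1 - Real.cos θ)
          (mul_nonneg (norm_nonneg p.1) (norm_nonneg p.2))]
    calc ENNReal.ofReal (A + B - 2 * Real.cos θ * Real.sqrt A * Real.sqrt B)
        ≤ ENNReal.ofReal
            (∫ p : Euc d × Euc d, (‖p.1‖ ^ 2 + ‖p.2‖ ^ 2 - 2 * Real.cos θ * (‖p.1‖ * ‖p.2‖)) ∂σ) :=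
          ENNReal.ofReal_le_ofReal hIg
      _ = ∫⁻ p : Euc d × Euc d,
            ENNReal.ofReal (‖p.1‖ ^ 2 + ‖p.2‖ ^ 2 - 2 * Real.cos θ * (‖p.1‖ * ‖p.2‖)) ∂σ :=
          ofReal_integral_eq_lintegral_ofReal (hsum.sub (hInt3.const_mul _))
            (Filter.Eventually.of_forall hg0)
      _ ≤ ∫⁻ p : Euc d × Euc d, ENNReal.ofReal (‖p.1 - p.2‖ ^ 2) ∂σ := lintegral_mono_ae h_ae
  -- finiteness of W2sq via the product coupling
  have hfin : W2sq μ ν ≠ ⊤ := by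
    have hcop : (μ.prod ν) ∈ Couplings μ ν := by
      constructor
      · rw [Measure.map_fst_prod]; simp
      · rw [Measure.map_snd_prod]; simp
    have hle : W2sq μ ν ≤ ∫⁻ p : Euc d × Euc d, ENNReal.ofReal (‖p.1 - p.2‖ ^ 2) ∂(μ.prod ν) :=
      iInf₂_le _ hcop
    have m1 : Measurable fun x : Euc d => ENNReal.ofReal (2 * ‖x‖ ^ 2) :=
      ((continuous_const.mul contsq).measurable).ennreal_ofReal
    have hb : ∀ p : Euc d × Euc d, ENNReal.ofReal (‖p.1 - p.2‖ ^ 2)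
        ≤ ENNReal.ofReal (2 * ‖p.1‖ ^ 2) + ENNReal.ofReal (2 * ‖p.2‖ ^ 2) := by
      intro p
      rw [← ENNReal.ofReal_add (by positivity) (by positivity)]
      apply ENNReal.ofReal_le_ofReal
      nlinarith [mul_self_le_mul_self (norm_nonneg (p.1 - p.2)) (norm_sub_le p.1 p.2),
        sq_nonneg (‖p.1‖ - ‖p.2‖)]
    have ffin : ∀ (ρ : Measure (Euc d)), Integrable (fun x : Euc d => ‖x‖ ^ 2) ρ →
        ∫⁻ x, ENNReal.ofReal (2 * ‖x‖ ^ 2) ∂ρ < ⊤ := by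
      intro ρ hρ
      have h1 : ∫⁻ x, ENNReal.ofReal (2 * ‖x‖ ^ 2) ∂ρ
          = 2 * ∫⁻ x, ENNReal.ofReal (‖x‖ ^ 2) ∂ρ := by
        rw [← lintegral_const_mul' 2 _ (by norm_num)]
        congr 1; funext x
        rw [ENNReal.ofReal_mul (by norm_num : (0:ℝ) ≤ 2)]
        norm_num
      have h2 : ∫⁻ x, ENNReal.ofReal (‖x‖ ^ 2) ∂ρ < ⊤ := by
        have := (hasFiniteIntegral_iff_norm _).mp hρ.hasFiniteIntegral
        refine lt_of_eq_of_lt ?_ this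
        congr 1; funext x
        rw [Real.norm_of_nonneg (by positivity)]
      rw [h1]
      exact ENNReal.mul_lt_top (by norm_num) h2
    have hfin1 : ∫⁻ p : Euc d × Euc d, ENNReal.ofReal (2 * ‖p.1‖ ^ 2) ∂(μ.prod ν) < ⊤ := by
      have e : ∫⁻ p : Euc d × Euc d, ENNReal.ofReal (2 * ‖p.1‖ ^ 2) ∂(μ.prod ν)
          = ∫⁻ x, ENNReal.ofReal (2 * ‖x‖ ^ 2) ∂μ := by
        conv_rhs => rw [← hcop.1]
        rw [lintegral_map m1 measurable_fst]
      rw [e]; exact ffin μ hμ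
    have hfin2 : ∫⁻ p : Euc d × Euc d, ENNReal.ofReal (2 * ‖p.2‖ ^ 2) ∂(μ.prod ν) < ⊤ := by
      have e : ∫⁻ p : Euc d × Euc d, ENNReal.ofReal (2 * ‖p.2‖ ^ 2) ∂(μ.prod ν)
          = ∫⁻ y, ENNReal.ofReal (2 * ‖y‖ ^ 2) ∂ν := by
        conv_rhs => rw [← hcop.2]
        rw [lintegral_map m1 measurable_snd]
      rw [e]; exact ffin ν hν
    refine ne_top_of_le_ne_top ?_ hle
    refine ne_of_lt (lt_of_le_of_lt (lintegral_mono hb) ?_)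
    have m1' : Measurable fun p : Euc d × Euc d => ENNReal.ofReal (2 * ‖p.1‖ ^ 2) :=
      m1.comp measurable_fst
    rw [lintegral_add_left m1']
    exact ENNReal.add_lt_top.mpr ⟨hfin1, hfin2⟩
  have hgeall : ENNReal.ofReal (A + B - 2 * Real.cos θ * Real.sqrt A * Real.sqrt B)
      ≤ W2sq μ ν := le_iInf₂ key
  rw [ge_iff_le]
  exact (ENNReal.ofReal_le_iff_le_toReal hfin).mp hgeall

end
end

section
/- For d = 1, let μ := (δ_1 + δ_{-1})/2 and, for each positive integer n, ν_n := (1 - 1/n²)δ_0 + (1/(2n²))(δ_n + δ_{-n}). Then μ and ν_n have mean 0 and unit second moment, and W₂(μ, ν_n)² = 2 - 2/n; consequently the comparison angle ∠(μ,ν_n) = arccos(1/n), which tends to π/2 as n → ∞. -/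
open MeasureTheory Real ENNReal

noncomputable section

lemma int_dirac (f : ℝ → ℝ) (a : ℝ) : Integrable f (Measure.dirac a) :=
  (integrable_const (f a)).congr (ae_eq_dirac f).symm

lemma integral_three (f : ℝ → ℝ) (c d : ℝ≥0∞) (hc : c ≠ ∞) (hd : d ≠ ∞) (a b e : ℝ) :
    ∫ x, f x ∂(c • Measure.dirac a + d • (Measure.dirac b + Measure.dirac e))
      = c.toReal * f a + d.toReal * (f b + f e) := by
  rw [smul_add, ← add_assoc,
    integral_add_measure (((int_dirac f a).smul_measure hc).add_measure
      ((int_dirac f b).smul_measure hd)) ((int_dirac f e).smul_measure hd),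
    integral_add_measure ((int_dirac f a).smul_measure hc) ((int_dirac f b).smul_measure hd)]
  simp [integral_smul_measure, integral_dirac, smul_eq_mul]
  ring

lemma lintegral_combo (f : ℝ → ℝ≥0∞) (c d : ℝ≥0∞) (a b e : ℝ) :
    ∫⁻ x, f x ∂(c • Measure.dirac a + d • (Measure.dirac b + Measure.dirac e))
      = c * f a + d * (f b + f e) := by
  simp [lintegral_add_measure, lintegral_smul_measure, lintegral_dirac, mul_add]

lemma lintegral_four (f : ℝ × ℝ → ℝ≥0∞) (a b : ℝ≥0∞) (p q r s : ℝ × ℝ) :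
    ∫⁻ x, f x ∂(a • Measure.dirac p + a • Measure.dirac q + b • Measure.dirac r
        + b • Measure.dirac s) = a * f p + a * f q + b * f r + b * f s := by
  simp [lintegral_add_measure, lintegral_smul_measure, lintegral_dirac]


lemma integral_two (f : ℝ → ℝ) (c d : ℝ≥0∞) (hc : c ≠ ∞) (hd : d ≠ ∞) (a b : ℝ) :
    ∫ x, f x ∂(c • Measure.dirac a + d • Measure.dirac b)
      = c.toReal * f a + d.toReal * f b := by
  rw [integral_add_measure ((int_dirac f a).smul_measure hc) ((int_dirac f b).smul_measure hd),
    integral_smul_measure, integral_smul_measure, integral_dirac, integral_dirac]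
  simp [smul_eq_mul]

lemma w2part (n : ℕ) (hn : 0 < n) (μ νn : Measure ℝ)
    (hμdef : μ = (2 : ℝ≥0∞)⁻¹ • Measure.dirac (1 : ℝ) + (2 : ℝ≥0∞)⁻¹ • Measure.dirac (-1 : ℝ))
    (hνdef : νn = ENNReal.ofReal (1 - 1 / (n : ℝ) ^ 2) • Measure.dirac (0 : ℝ)
      + ENNReal.ofReal (1 / (2 * (n : ℝ) ^ 2)) • (Measure.dirac (n : ℝ) + Measure.dirac (-(n : ℝ)))) :
    W2sq μ νn = ENNReal.ofReal (2 - 2 / (n : ℝ)) := by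
  have hnR : (1:ℝ) ≤ n := by exact_mod_cast hn
  have h0 : (0:ℝ) < n := by linarith
  have hc0 : (0:ℝ) ≤ 1 - 1/(n:ℝ)^2 := by
    rw [sub_nonneg, div_le_one (by positivity)]; nlinarith
  set a : ℝ≥0∞ := ENNReal.ofReal ((1 - 1/(n:ℝ)^2)/2) with ha
  set b : ℝ≥0∞ := ENNReal.ofReal (1/(2*(n:ℝ)^2)) with hb
  set σ₀ : Measure (ℝ×ℝ) := a • Measure.dirac ((1:ℝ),(0:ℝ)) + a • Measure.dirac (-1,0)
    + b • Measure.dirac (1,(n:ℝ)) + b • Measure.dirac (-1,-(n:ℝ)) with hσ₀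
  have hab : a + b = (2:ℝ≥0∞)⁻¹ := by
    rw [ha, hb, ← ENNReal.ofReal_add (by linarith) (by positivity),
      show (1-1/(n:ℝ)^2)/2 + 1/(2*(n:ℝ)^2) = (2:ℝ)⁻¹ by field_simp; ring,
      ENNReal.ofReal_inv_of_pos two_pos, ENNReal.ofReal_ofNat]
  have haa : a + a = ENNReal.ofReal (1 - 1/(n:ℝ)^2) := by
    rw [ha, ← ENNReal.ofReal_add (by linarith) (by linarith)]
    norm_num
  have hcoup : σ₀ ∈ Couplings μ νn := by
    constructor
    · rw [hσ₀, Measure.map_add _ _ measurable_fst, Measure.map_add _ _ measurable_fst,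
        Measure.map_add _ _ measurable_fst, Measure.map_smul, Measure.map_smul,
        Measure.map_smul, Measure.map_smul, Measure.map_dirac' measurable_fst,
        Measure.map_dirac' measurable_fst, Measure.map_dirac' measurable_fst,
        Measure.map_dirac' measurable_fst, hμdef]
      show a • Measure.dirac (1:ℝ) + a • Measure.dirac (-1:ℝ) + b • Measure.dirac (1:ℝ)
          + b • Measure.dirac (-1:ℝ) = _
      rw [show a • Measure.dirac (1:ℝ) + a • Measure.dirac (-1:ℝ) + b • Measure.dirac (1:ℝ)
          + b • Measure.dirac (-1:ℝ) = (a+b) • Measure.dirac (1:ℝ)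
            + (a+b) • Measure.dirac (-1:ℝ) by rw [add_smul, add_smul]; abel, hab]
    · rw [hσ₀, Measure.map_add _ _ measurable_snd, Measure.map_add _ _ measurable_snd,
        Measure.map_add _ _ measurable_snd, Measure.map_smul, Measure.map_smul,
        Measure.map_smul, Measure.map_smul, Measure.map_dirac' measurable_snd,
        Measure.map_dirac' measurable_snd, Measure.map_dirac' measurable_snd,
        Measure.map_dirac' measurable_snd, hνdef]
      show a • Measure.dirac (0:ℝ) + a • Measure.dirac (0:ℝ) + b • Measure.dirac (n:ℝ)
          + b • Measure.dirac (-(n:ℝ)) = _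
      rw [smul_add, ← add_smul, haa, add_assoc]
  -- cost of σ₀
  have hcost : ∫⁻ p : ℝ × ℝ, ENNReal.ofReal (‖p.1 - p.2‖ ^ 2) ∂σ₀
      = ENNReal.ofReal (2 - 2/(n:ℝ)) := by
    rw [hσ₀, lintegral_four]
    have v1 : ENNReal.ofReal (‖((1:ℝ),(0:ℝ)).1 - ((1:ℝ),(0:ℝ)).2‖ ^ 2) = ENNReal.ofReal 1 := by
      norm_num
    have v2 : ENNReal.ofReal (‖((-1:ℝ),(0:ℝ)).1 - ((-1:ℝ),(0:ℝ)).2‖ ^ 2) = ENNReal.ofReal 1 := by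
      norm_num
    have v3 : ENNReal.ofReal (‖((1:ℝ),((n:ℝ))).1 - ((1:ℝ),((n:ℝ))).2‖ ^ 2)
        = ENNReal.ofReal ((1-(n:ℝ))^2) := by
      rw [show ‖((1:ℝ),((n:ℝ))).1 - ((1:ℝ),((n:ℝ))).2‖ ^ 2 = (1-(n:ℝ))^2 by
        simp [Real.norm_eq_abs, sq_abs]]
    have v4 : ENNReal.ofReal (‖((-1:ℝ),(-(n:ℝ))).1 - ((-1:ℝ),(-(n:ℝ))).2‖ ^ 2)
        = ENNReal.ofReal ((1-(n:ℝ))^2) := by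
      rw [show ‖((-1:ℝ),(-(n:ℝ))).1 - ((-1:ℝ),(-(n:ℝ))).2‖ ^ 2 = (1-(n:ℝ))^2 by
        simp [Real.norm_eq_abs, sq_abs]; ring_nf]
    have h1 : (0:ℝ) ≤ (1 - 1/(n:ℝ)^2)/2 * 1 := by nlinarith
    have h2 : (0:ℝ) ≤ 1/(2*(n:ℝ)^2) * (1-(n:ℝ))^2 := by positivity
    rw [v1, v2, v3, v4, ha, hb,
      ← ENNReal.ofReal_mul (by linarith), ← ENNReal.ofReal_mul (by positivity),
      ← ENNReal.ofReal_add h1 h1, ← ENNReal.ofReal_add (by linarith) h2,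
      ← ENNReal.ofReal_add (by linarith) h2]
    congr 1
    field_simp
    ring
  rw [W2sq]
  apply le_antisymm
  · exact le_trans (iInf₂_le σ₀ hcoup) (le_of_eq hcost)
  · refine le_iInf₂ fun σ hσ => ?_
    obtain ⟨hfst, hsnd⟩ := hσ
    set g : ℝ → ℝ≥0∞ := fun y => ENNReal.ofReal ((|y| - 1)^2) with hg
    have hgm : Measurable g := ((measurable_id.abs.sub measurable_const).pow_const 2).ennreal_ofReal
    have hA : MeasurableSet ({1, -1} : Set ℝ) :=
      ((Set.finite_singleton _).insert _).measurableSet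
    have hae : ∀ᵐ p : ℝ × ℝ ∂σ, p.1 ∈ ({1,-1} : Set ℝ) := by
      rw [ae_iff]
      have he : {p : ℝ × ℝ | ¬ p.1 ∈ ({1,-1}:Set ℝ)} = Prod.fst ⁻¹' ({1,-1}:Set ℝ)ᶜ := rfl
      rw [he, ← Measure.map_apply measurable_fst hA.compl, hfst, hμdef]
      simp [Measure.dirac_apply]
    have hpt : ∀ᵐ p : ℝ × ℝ ∂σ, g p.2 ≤ ENNReal.ofReal (‖p.1 - p.2‖^2) := by
      filter_upwards [hae] with p hp
      simp only [Set.mem_insert_iff, Set.mem_singleton_iff] at hp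
      have hnorm : ‖p.1 - p.2‖^2 = (p.1 - p.2)^2 := by rw [Real.norm_eq_abs, sq_abs]
      rw [hg]
      apply ENNReal.ofReal_le_ofReal
      rw [hnorm]
      rcases hp with h1 | h1 <;> rw [h1] <;>
        nlinarith [le_abs_self p.2, neg_abs_le p.2, sq_abs p.2]
    have hν : ∫⁻ y, g y ∂νn = ENNReal.ofReal (2 - 2/(n:ℝ)) := by
      rw [hνdef, lintegral_combo, hg]
      simp only [abs_zero, abs_neg, abs_of_nonneg (le_of_lt h0)]
      have h1 : (0:ℝ) ≤ ((0:ℝ) - 1)^2 := by positivity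
      have h2 : (0:ℝ) ≤ ((n:ℝ) - 1)^2 := by positivity
      rw [← ENNReal.ofReal_add h2 h2, ← ENNReal.ofReal_mul hc0,
        ← ENNReal.ofReal_mul (by positivity), ← ENNReal.ofReal_add (by nlinarith) (by positivity)]
      congr 1
      field_simp
      ring
    calc ENNReal.ofReal (2 - 2/(n:ℝ)) = ∫⁻ y, g y ∂νn := hν.symm
      _ = ∫⁻ p : ℝ×ℝ, g p.2 ∂σ := by rw [← hsnd, lintegral_map hgm measurable_snd]
      _ ≤ _ := lintegral_mono_ae hpt

theorem stmt9 (n : ℕ) (hn : 0 < n) (μ νn : Measure ℝ)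
    (hμdef : μ = (2 : ℝ≥0∞)⁻¹ • Measure.dirac (1 : ℝ) + (2 : ℝ≥0∞)⁻¹ • Measure.dirac (-1 : ℝ))
    (hνdef : νn = ENNReal.ofReal (1 - 1 / (n : ℝ) ^ 2) • Measure.dirac (0 : ℝ)
      + ENNReal.ofReal (1 / (2 * (n : ℝ) ^ 2)) • (Measure.dirac (n : ℝ) + Measure.dirac (-(n : ℝ)))) :
    (∫ x, x ∂μ = 0) ∧ (∫ x, x ^ 2 ∂μ = 1) ∧ (∫ x, x ∂νn = 0) ∧ (∫ x, x ^ 2 ∂νn = 1) ∧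
    W2sq μ νn = ENNReal.ofReal (2 - 2 / (n : ℝ)) ∧
    Real.arccos ((1 + 1 - (2 - 2 / (n : ℝ))) / (2 * 1 * 1)) = Real.arccos (1 / (n : ℝ)) ∧
    Filter.Tendsto (fun m : ℕ => Real.arccos (1 / (m : ℝ))) Filter.atTop (nhds (π / 2)) := by
  have hnR : (1:ℝ) ≤ n := by exact_mod_cast hn
  have h0 : (0:ℝ) < n := by linarith
  have hc0 : (0:ℝ) ≤ 1 - 1/(n:ℝ)^2 := by
    rw [sub_nonneg, div_le_one (by positivity)]; nlinarith
  refine ⟨?_, ?_, ?_, ?_, w2part n hn μ νn hμdef hνdef, by congr 1; ring, ?_⟩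
  · rw [hμdef, integral_two _ _ _ (by simp) (by simp)]
    simp
  · rw [hμdef, integral_two (fun x => x ^ 2) _ _ (by simp) (by simp)]
    norm_num [ENNReal.toReal_inv]
  · rw [hνdef, integral_three _ _ _ ofReal_ne_top ofReal_ne_top]
    simp
  · rw [hνdef, integral_three (fun x => x ^ 2) _ _ ofReal_ne_top ofReal_ne_top,
      ENNReal.toReal_ofReal hc0, ENNReal.toReal_ofReal (by positivity)]
    show (1 - 1/(n:ℝ)^2) * (0:ℝ)^2 + 1/(2*(n:ℝ)^2) * ((n:ℝ)^2 + (-(n:ℝ))^2) = 1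
    field_simp
    ring
  · have h := (Real.continuous_arccos.tendsto 0).comp tendsto_one_div_atTop_nhds_zero_nat
    simpa [Function.comp_def, Real.arccos_zero] using h

end
end

section
/- For d = 1: for any two Borel probability measures μ, ν on ℝ with finite second moments and mean 0, neither equal to δ_0, one has W₂(μ,ν)² < W₂(δ_0,μ)² + W₂(δ_0,ν)², i.e., the inequality is always strict. -/
open MeasureTheory Real ENNReal

noncomputable section

namespace Stmt10Aux

open Set

lemma integrable_id_of_sq {μ : Measure ℝ} [IsProbabilityMeasure μ]
    (h : Integrable (fun x => x ^ 2) μ) : Integrable (fun x : ℝ => x) μ := by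
  have h1 : Integrable (fun x : ℝ => x ^ 2 + 1) μ := h.add (integrable_const 1)
  refine h1.mono' measurable_id.aestronglyMeasurable ?_
  filter_upwards with x
  rw [norm_eq_abs]
  nlinarith [sq_nonneg (|x| - 1), sq_abs x, abs_nonneg x]

lemma eq_dirac_zero {μ : Measure ℝ} [IsProbabilityMeasure μ]
    (h : μ ({0}ᶜ) = 0) : μ = Measure.dirac 0 := by
  have h0 : μ {0} = 1 := by
    have huniv : μ Set.univ = 1 := measure_univ
    rw [← huniv]
    rw [← measure_add_measure_compl (MeasurableSet.singleton (0:ℝ))]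
    simp [h]
  ext s hs
  rw [Measure.dirac_apply' _ hs]
  by_cases h0s : (0:ℝ) ∈ s
  · have h1 : μ s ≤ 1 := prob_le_one
    have h2 : μ {0} ≤ μ s := measure_mono (Set.singleton_subset_iff.2 h0s)
    rw [h0] at h2
    simp [Set.indicator_of_mem h0s, le_antisymm h1 h2]
  · have : s ⊆ {(0:ℝ)}ᶜ := fun x hx => by
      simp only [Set.mem_compl_iff, Set.mem_singleton_iff]
      rintro rfl; exact h0s hx
    simp [Set.indicator_of_notMem h0s, measure_mono_null this h]

lemma neg_null_of_pos_null {μ : Measure ℝ} [IsProbabilityMeasure μ]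
    (h2 : Integrable (fun x => x ^ 2) μ) (hm : ∫ x, x ∂μ = 0)
    (hp : μ (Ioi 0) = 0) : μ (Iio 0) = 0 := by
  have hid : Integrable (fun x : ℝ => x) μ := integrable_id_of_sq h2
  have hIp : ∫ x in Ioi (0:ℝ), x ∂μ = 0 := by
    rw [Measure.restrict_eq_zero.2 hp, integral_zero_measure]
  have hIm : ∫ x in Iic (0:ℝ), (-x) ∂μ = 0 := by
    have := integral_add_compl (measurableSet_Ioi (a := (0:ℝ))) hid
    rw [compl_Ioi] at this
    rw [integral_neg]
    have : ∫ x in Iic (0:ℝ), x ∂μ = 0 := by linarith [this.trans hm, hIp]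
    simp [this]
  have key := (setIntegral_pos_iff_support_of_nonneg_ae
    (f := fun x : ℝ => -x) (s := Iic 0) (μ := μ)
    ((ae_restrict_iff' measurableSet_Iic).2 (Filter.Eventually.of_forall
      (fun x hx => by simpa using hx)))
    (hid.neg.integrableOn)).not
  rw [hIm] at key
  have hsupp : Function.support (fun x : ℝ => -x) ∩ Iic 0 = Iio 0 := by
    ext x
    simp only [Function.mem_support, Set.mem_inter_iff, Set.mem_Iic, Set.mem_Iio, ne_eq,
      neg_eq_zero]
    constructor
    · rintro ⟨hx, hx'⟩; exact lt_of_le_of_ne hx' hx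
    · intro hx; exact ⟨ne_of_lt hx, le_of_lt hx⟩
  rw [hsupp] at key
  simpa using key.1 (lt_irrefl 0)

lemma pos_null_of_neg_null {μ : Measure ℝ} [IsProbabilityMeasure μ]
    (h2 : Integrable (fun x => x ^ 2) μ) (hm : ∫ x, x ∂μ = 0)
    (hp : μ (Iio 0) = 0) : μ (Ioi 0) = 0 := by
  have hid : Integrable (fun x : ℝ => x) μ := integrable_id_of_sq h2
  have hIm : ∫ x in Iio (0:ℝ), x ∂μ = 0 := by
    rw [Measure.restrict_eq_zero.2 hp, integral_zero_measure]
  have hIp : ∫ x in Ici (0:ℝ), x ∂μ = 0 := by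
    have h := integral_add_compl (measurableSet_Iio (a := (0:ℝ))) hid
    rw [compl_Iio] at h
    rw [hm, hIm] at h
    linarith
  have key := (setIntegral_pos_iff_support_of_nonneg_ae
    (f := fun x : ℝ => x) (s := Ici 0) (μ := μ)
    ((ae_restrict_iff' measurableSet_Ici).2 (Filter.Eventually.of_forall
      (fun x hx => by simpa using hx)))
    hid.integrableOn).not
  rw [hIp] at key
  have hsupp : Function.support (fun x : ℝ => x) ∩ Ici 0 = Ioi 0 := by
    ext x
    simp only [Function.mem_support, Set.mem_inter_iff, Set.mem_Ici, Set.mem_Ioi, ne_eq]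
    constructor
    · rintro ⟨hx, hx'⟩; exact lt_of_le_of_ne hx' (Ne.symm hx)
    · intro hx; exact ⟨ne_of_gt hx, le_of_lt hx⟩
  rw [hsupp] at key
  simpa using key.1 (lt_irrefl 0)

lemma pos_parts {μ : Measure ℝ} [IsProbabilityMeasure μ]
    (h2 : Integrable (fun x => x ^ 2) μ) (hm : ∫ x, x ∂μ = 0)
    (h0 : μ ≠ Measure.dirac 0) : 0 < μ (Ioi 0) ∧ 0 < μ (Iio 0) := by
  have hdichot : ¬ (μ (Ioi 0) = 0 ∧ μ (Iio 0) = 0) := by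
    rintro ⟨h1, h2'⟩
    apply h0
    apply eq_dirac_zero
    have : ({(0:ℝ)}ᶜ : Set ℝ) = Iio 0 ∪ Ioi 0 := (Set.Iio_union_Ioi).symm
    rw [this]
    exact measure_union_null h2' h1
  constructor
  · rcases eq_or_lt_of_le (zero_le : 0 ≤ μ (Ioi 0)) with h | h
    · exact absurd ⟨h.symm, neg_null_of_pos_null h2 hm h.symm⟩ hdichot
    · exact h
  · rcases eq_or_lt_of_le (zero_le : 0 ≤ μ (Iio 0)) with h | h
    · exact absurd ⟨pos_null_of_neg_null h2 hm h.symm, h.symm⟩ hdichot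
    · exact h

lemma Ip_pos {μ : Measure ℝ} [IsProbabilityMeasure μ]
    (h2 : Integrable (fun x => x ^ 2) μ) (hA : 0 < μ (Ioi 0)) :
    0 < ∫ x in Ioi (0:ℝ), x ∂μ := by
  have hid : Integrable (fun x : ℝ => x) μ := integrable_id_of_sq h2
  refine (setIntegral_pos_iff_support_of_nonneg_ae (μ := μ) (s := Ioi 0) (f := fun x : ℝ => x)
    ((ae_restrict_iff' measurableSet_Ioi).2 (Filter.Eventually.of_forall
      (fun x hx => le_of_lt hx))) hid.integrableOn).2 ?_
  have hsupp : Function.support (fun x : ℝ => x) ∩ Ioi 0 = Ioi 0 := by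
    apply Set.inter_eq_self_of_subset_right
    intro x hx
    exact ne_of_gt hx
  rw [hsupp]; exact hA

lemma sq_int_pos {μ : Measure ℝ} [IsProbabilityMeasure μ]
    (h2 : Integrable (fun x => x ^ 2) μ) (hA : 0 < μ (Ioi 0)) :
    0 < ∫ x, x ^ 2 ∂μ := by
  rw [integral_pos_iff_support_of_nonneg (fun x => sq_nonneg x) h2]
  refine lt_of_lt_of_le hA (measure_mono ?_)
  intro x hx
  simp only [Function.mem_support]
  exact pow_ne_zero 2 (ne_of_gt hx)

lemma key (μ ν : Measure ℝ) [IsProbabilityMeasure μ] [IsProbabilityMeasure ν]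
    (hμ2 : Integrable (fun x => x ^ 2) μ) (hν2 : Integrable (fun y => y ^ 2) ν)
    (hmμ : ∫ x, x ∂μ = 0) (hmν : ∫ y, y ∂ν = 0)
    (hμ0 : μ ≠ Measure.dirac 0) (hν0 : ν ≠ Measure.dirac 0)
    (hAC : μ (Ioi 0) ≤ ν (Ioi 0)) :
    ∃ σ ∈ Couplings μ ν,
      (∫⁻ p : ℝ × ℝ, ENNReal.ofReal (‖p.1 - p.2‖ ^ 2) ∂σ)
        < ENNReal.ofReal ((∫ x, x ^ 2 ∂μ) + ∫ y, y ^ 2 ∂ν) := by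
  classical
  obtain ⟨hApos, hAneg⟩ := pos_parts hμ2 hmμ hμ0
  obtain ⟨hCpos, hCneg⟩ := pos_parts hν2 hmν hν0
  have hIμ : 0 < ∫ x in Ioi (0:ℝ), x ∂μ := Ip_pos hμ2 hApos
  have hIν : 0 < ∫ x in Ioi (0:ℝ), x ∂ν := Ip_pos hν2 hCpos
  have hSμ : 0 < ∫ x, x ^ 2 ∂μ := sq_int_pos hμ2 hApos
  have hSν : 0 < ∫ y, y ^ 2 ∂ν := sq_int_pos hν2 hCpos
  have hidμ : Integrable (fun x : ℝ => x) μ := integrable_id_of_sq hμ2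
  have hidν : Integrable (fun x : ℝ => x) ν := integrable_id_of_sq hν2
  set A := μ (Ioi 0) with hAdef
  set C := ν (Ioi 0) with hCdef
  have hAne : A ≠ 0 := hApos.ne'
  have hCne : C ≠ 0 := hCpos.ne'
  have hAtop : A ≠ ∞ := measure_ne_top μ _
  have hCtop : C ≠ ∞ := measure_ne_top ν _
  have hA1 : A ≤ 1 := prob_le_one
  have hC1 : C ≤ 1 := prob_le_one
  have hμIic : μ (Iic 0) = 1 - A := by
    rw [← compl_Ioi, measure_compl measurableSet_Ioi hAtop, measure_univ]
  have hνIic : ν (Iic 0) = 1 - C := by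
    rw [← compl_Ioi, measure_compl measurableSet_Ioi hCtop, measure_univ]
  have h1Ane : (1 : ℝ≥0∞) - A ≠ 0 := by
    rw [← hμIic]
    exact (lt_of_lt_of_le hAneg (measure_mono Iio_subset_Iic_self)).ne'
  have h1Cne : (1 : ℝ≥0∞) - C ≠ 0 := by
    rw [← hνIic]
    exact (lt_of_lt_of_le hCneg (measure_mono Iio_subset_Iic_self)).ne'
  have h1Atop : (1 : ℝ≥0∞) - A ≠ ∞ := ne_top_of_le_ne_top one_ne_top tsub_le_self
  have h1Ctop : (1 : ℝ≥0∞) - C ≠ ∞ := ne_top_of_le_ne_top one_ne_top tsub_le_self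
  have hCAtop : C - A ≠ ∞ := ne_top_of_le_ne_top hCtop tsub_le_self
  set μp : Measure ℝ := (A⁻¹ : ℝ≥0∞) • μ.restrict (Ioi 0) with hμpdef
  set μm : Measure ℝ := ((1 - A)⁻¹ : ℝ≥0∞) • μ.restrict (Iic 0) with hμmdef
  set νp : Measure ℝ := (C⁻¹ : ℝ≥0∞) • ν.restrict (Ioi 0) with hνpdef
  set νm : Measure ℝ := ((1 - C)⁻¹ : ℝ≥0∞) • ν.restrict (Iic 0) with hνmdef
  haveI : IsProbabilityMeasure μp := ⟨by
    simp [hμpdef, Measure.smul_apply, Measure.restrict_apply_univ, smul_eq_mul,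
      ENNReal.inv_mul_cancel hAne hAtop]
    exact ENNReal.inv_mul_cancel hAne hAtop⟩
  haveI : IsProbabilityMeasure μm := ⟨by
    simp [hμmdef, Measure.smul_apply, Measure.restrict_apply_univ, smul_eq_mul, hμIic,
      ENNReal.inv_mul_cancel h1Ane h1Atop]⟩
  haveI : IsProbabilityMeasure νp := ⟨by
    simp [hνpdef, Measure.smul_apply, Measure.restrict_apply_univ, smul_eq_mul,
      ENNReal.inv_mul_cancel hCne hCtop]
    exact ENNReal.inv_mul_cancel hCne hCtop⟩
  haveI : IsProbabilityMeasure νm := ⟨by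
    simp [hνmdef, Measure.smul_apply, Measure.restrict_apply_univ, smul_eq_mul, hνIic,
      ENNReal.inv_mul_cancel h1Cne h1Ctop]⟩
  set σ : Measure (ℝ × ℝ) :=
    A • (μp.prod νp) + ((C - A) • (μm.prod νp) + (1 - C) • (μm.prod νm)) with hσdef
  have hAμp : A • μp = μ.restrict (Ioi 0) := by
    rw [hμpdef, smul_smul, ENNReal.mul_inv_cancel hAne hAtop, one_smul]
  have h1Aμm : (1 - A) • μm = μ.restrict (Iic 0) := by
    rw [hμmdef, smul_smul, ENNReal.mul_inv_cancel h1Ane h1Atop, one_smul]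
  have hCνp : C • νp = ν.restrict (Ioi 0) := by
    rw [hνpdef, smul_smul, ENNReal.mul_inv_cancel hCne hCtop, one_smul]
  have h1Cνm : (1 - C) • νm = ν.restrict (Iic 0) := by
    rw [hνmdef, smul_smul, ENNReal.mul_inv_cancel h1Cne h1Ctop, one_smul]
  have hfst : σ.map Prod.fst = μ := by
    rw [hσdef, Measure.map_add _ _ measurable_fst, Measure.map_add _ _ measurable_fst,
      Measure.map_smul, Measure.map_smul, Measure.map_smul,
      Measure.map_fst_prod, Measure.map_fst_prod, Measure.map_fst_prod]
    simp only [measure_univ, one_smul]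
    rw [← add_smul, add_comm (C - A), tsub_add_tsub_cancel hC1 hAC, hAμp, h1Aμm,
      ← compl_Ioi, Measure.restrict_add_restrict_compl measurableSet_Ioi]
  have hsnd : σ.map Prod.snd = ν := by
    rw [hσdef, Measure.map_add _ _ measurable_snd, Measure.map_add _ _ measurable_snd,
      Measure.map_smul, Measure.map_smul, Measure.map_smul,
      Measure.map_snd_prod, Measure.map_snd_prod, Measure.map_snd_prod]
    simp only [measure_univ, one_smul]
    rw [← add_assoc, ← add_smul, add_tsub_cancel_of_le hAC, hCνp, h1Cνm,
      ← compl_Ioi, Measure.restrict_add_restrict_compl measurableSet_Ioi]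
  set a := A.toReal with hadef
  set c := C.toReal with hcdef
  have ha : 0 < a := ENNReal.toReal_pos hAne hAtop
  have hc : 0 < c := ENNReal.toReal_pos hCne hCtop
  have hA1' : A < 1 := lt_of_le_of_ne hA1 (fun h => h1Ane (by rw [h]; simp))
  have hC1' : C < 1 := lt_of_le_of_ne hC1 (fun h => h1Cne (by rw [h]; simp))
  have ha1 : a < 1 := by
    have := (ENNReal.toReal_lt_toReal hAtop one_ne_top).2 hA1'
    simpa using this
  have hc1 : c < 1 := by
    have := (ENNReal.toReal_lt_toReal hCtop one_ne_top).2 hC1'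
    simpa using this
  have hac : a ≤ c := ENNReal.toReal_mono hCtop hAC
  have hCA : (C - A).toReal = c - a := ENNReal.toReal_sub_of_le hAC hCtop
  have h1C : ((1 : ℝ≥0∞) - C).toReal = 1 - c := by
    rw [ENNReal.toReal_sub_of_le hC1 one_ne_top, ENNReal.toReal_one]
  have h1A : ((1 : ℝ≥0∞) - A).toReal = 1 - a := by
    rw [ENNReal.toReal_sub_of_le hA1 one_ne_top, ENNReal.toReal_one]
  set Iμ := ∫ x in Ioi (0:ℝ), x ∂μ with hIμdef
  set Iν := ∫ x in Ioi (0:ℝ), x ∂ν with hIνdef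
  have hImμ : ∫ x in Iic (0:ℝ), x ∂μ = -Iμ := by
    have h := integral_add_compl (measurableSet_Ioi (a := (0:ℝ))) hidμ
    rw [compl_Ioi, hmμ] at h
    linarith
  have hImν : ∫ x in Iic (0:ℝ), x ∂ν = -Iν := by
    have h := integral_add_compl (measurableSet_Ioi (a := (0:ℝ))) hidν
    rw [compl_Ioi, hmν] at h
    linarith
  have hMμp : ∫ x, x ∂μp = a⁻¹ * Iμ := by
    rw [hμpdef, integral_smul_measure, ENNReal.toReal_inv]
    simp [smul_eq_mul, hIμdef, hadef]
  have hMμm : ∫ x, x ∂μm = (1 - a)⁻¹ * (-Iμ) := by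
    rw [hμmdef, integral_smul_measure, ENNReal.toReal_inv, h1A]
    simp [smul_eq_mul, hImμ]
  have hMνp : ∫ x, x ∂νp = c⁻¹ * Iν := by
    rw [hνpdef, integral_smul_measure, ENNReal.toReal_inv]
    simp [smul_eq_mul, hIνdef, hcdef]
  have hMνm : ∫ x, x ∂νm = (1 - c)⁻¹ * (-Iν) := by
    rw [hνmdef, integral_smul_measure, ENNReal.toReal_inv, h1C]
    simp [smul_eq_mul, hImν]
  have hintμp : Integrable (fun x : ℝ => x) μp :=
    hidμ.integrableOn.smul_measure (ENNReal.inv_ne_top.2 hAne)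
  have hintμm : Integrable (fun x : ℝ => x) μm :=
    hidμ.integrableOn.smul_measure (ENNReal.inv_ne_top.2 h1Ane)
  have hintνp : Integrable (fun x : ℝ => x) νp :=
    hidν.integrableOn.smul_measure (ENNReal.inv_ne_top.2 hCne)
  have hintνm : Integrable (fun x : ℝ => x) νm :=
    hidν.integrableOn.smul_measure (ENNReal.inv_ne_top.2 h1Cne)
  have hE1 : Integrable (fun p : ℝ × ℝ => p.1 * p.2) (A • (μp.prod νp)) :=
    (hintμp.mul_prod hintνp).smul_measure hAtop
  have hE2 : Integrable (fun p : ℝ × ℝ => p.1 * p.2) ((C - A) • (μm.prod νp)) :=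
    (hintμm.mul_prod hintνp).smul_measure hCAtop
  have hE3 : Integrable (fun p : ℝ × ℝ => p.1 * p.2) ((1 - C) • (μm.prod νm)) :=
    (hintμm.mul_prod hintνm).smul_measure h1Ctop
  have hmulσ : Integrable (fun p : ℝ × ℝ => p.1 * p.2) σ := by
    rw [hσdef]
    exact hE1.add_measure (hE2.add_measure hE3)
  set E := ∫ p : ℝ × ℝ, p.1 * p.2 ∂σ with hEdef
  have hEval : E = Iμ * Iν * ((1 - a)⁻¹ * c⁻¹) := by
    rw [hEdef, hσdef, integral_add_measure hE1 (hE2.add_measure hE3),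
      integral_add_measure hE2 hE3, integral_smul_measure, integral_smul_measure,
      integral_smul_measure,
      integral_prod_mul (f := fun x : ℝ => x) (g := fun y : ℝ => y),
      integral_prod_mul (f := fun x : ℝ => x) (g := fun y : ℝ => y),
      integral_prod_mul (f := fun x : ℝ => x) (g := fun y : ℝ => y),
      hMμp, hMμm, hMνp, hMνm, hCA, h1C, ← hadef]
    have h1a : (1 : ℝ) - a ≠ 0 := by linarith
    have h1c : (1 : ℝ) - c ≠ 0 := by linarith
    have ha0 : a ≠ 0 := ha.ne'
    have hc0 : c ≠ 0 := hc.ne'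
    have ha' : a * a⁻¹ = 1 := mul_inv_cancel₀ ha0
    have hc' : c * c⁻¹ = 1 := mul_inv_cancel₀ hc0
    have h1a' : (1 - a) * (1 - a)⁻¹ = 1 := mul_inv_cancel₀ h1a
    have h1c' : (1 - c) * (1 - c)⁻¹ = 1 := mul_inv_cancel₀ h1c
    simp only [smul_eq_mul]
    linear_combination (Iμ * Iν * c⁻¹) * ha' - (Iμ * Iν * (1 - a)⁻¹) * hc'
      + (Iμ * Iν * (1 - a)⁻¹) * h1c' - (Iμ * Iν * c⁻¹) * h1a'
  have hEpos : 0 < E := by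
    rw [hEval]
    have h1a : (0:ℝ) < 1 - a := by linarith
    positivity
  have hsq1 : Integrable (fun p : ℝ × ℝ => p.1 ^ 2) σ := by
    have h := integrable_map_measure (μ := σ) (f := Prod.fst)
      (g := fun x : ℝ => x ^ 2)
      (by rw [hfst]; exact hμ2.aestronglyMeasurable) measurable_fst.aemeasurable
    rw [hfst] at h
    exact h.1 hμ2
  have hsq2 : Integrable (fun p : ℝ × ℝ => p.2 ^ 2) σ := by
    have h := integrable_map_measure (μ := σ) (f := Prod.snd)
      (g := fun x : ℝ => x ^ 2)
      (by rw [hsnd]; exact hν2.aestronglyMeasurable) measurable_snd.aemeasurable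
    rw [hsnd] at h
    exact h.1 hν2
  have hdiffeq : (fun p : ℝ × ℝ => (p.1 - p.2) ^ 2)
      = fun p : ℝ × ℝ => p.1 ^ 2 + p.2 ^ 2 - 2 * (p.1 * p.2) := by
    funext p; ring
  have hdiff : Integrable (fun p : ℝ × ℝ => (p.1 - p.2) ^ 2) σ := by
    rw [hdiffeq]
    exact (hsq1.add hsq2).sub (hmulσ.const_mul 2)
  have hfst2 : ∫ p : ℝ × ℝ, p.1 ^ 2 ∂σ = ∫ x, x ^ 2 ∂μ := by
    rw [← hfst, integral_map measurable_fst.aemeasurable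
      (by rw [hfst]; exact hμ2.aestronglyMeasurable)]
  have hsnd2 : ∫ p : ℝ × ℝ, p.2 ^ 2 ∂σ = ∫ y, y ^ 2 ∂ν := by
    rw [← hsnd, integral_map measurable_snd.aemeasurable
      (by rw [hsnd]; exact hν2.aestronglyMeasurable)]
  have hexp : ∫ p : ℝ × ℝ, (p.1 - p.2) ^ 2 ∂σ
      = (∫ x, x ^ 2 ∂μ) + (∫ y, y ^ 2 ∂ν) - 2 * E := by
    have h12 : Integrable (fun p : ℝ × ℝ => p.1 ^ 2 + p.2 ^ 2) σ := by
      exact hsq1.add hsq2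
    have h2m : Integrable (fun p : ℝ × ℝ => 2 * (p.1 * p.2)) σ := by
      exact hmulσ.const_mul 2
    rw [hdiffeq, integral_sub h12 h2m, integral_add hsq1 hsq2, integral_const_mul,
      hfst2, hsnd2, hEdef]
  have hcostσ : (∫⁻ p : ℝ × ℝ, ENNReal.ofReal (‖p.1 - p.2‖ ^ 2) ∂σ)
      = ENNReal.ofReal ((∫ x, x ^ 2 ∂μ) + (∫ y, y ^ 2 ∂ν) - 2 * E) := by
    have hnorm : (fun p : ℝ × ℝ => ENNReal.ofReal (‖p.1 - p.2‖ ^ 2))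
        = fun p : ℝ × ℝ => ENNReal.ofReal ((p.1 - p.2) ^ 2) := by
      funext p; rw [norm_eq_abs, sq_abs]
    rw [hnorm, ← ofReal_integral_eq_lintegral_ofReal hdiff
      (Filter.Eventually.of_forall fun p => sq_nonneg _), hexp]
  refine ⟨σ, ⟨hfst, hsnd⟩, ?_⟩
  rw [hcostσ]
  exact (ENNReal.ofReal_lt_ofReal_iff (by linarith)).2 (by linarith)

end Stmt10Aux

theorem stmt10 (μ ν : Measure ℝ) [IsProbabilityMeasure μ] [IsProbabilityMeasure ν]
    (hμ : Integrable (fun x => x ^ 2) μ) (hν : Integrable (fun y => y ^ 2) ν)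
    (hmμ : ∫ x, x ∂μ = 0) (hmν : ∫ y, y ∂ν = 0)
    (hμ0 : μ ≠ Measure.dirac 0) (hν0 : ν ≠ Measure.dirac 0) :
    W2sq μ ν < ENNReal.ofReal ((∫ x, x ^ 2 ∂μ) + ∫ y, y ^ 2 ∂ν) := by
  rcases le_total (μ (Set.Ioi 0)) (ν (Set.Ioi 0)) with h | h
  · obtain ⟨σ, hσ, hlt⟩ := Stmt10Aux.key μ ν hμ hν hmμ hmν hμ0 hν0 h
    exact lt_of_le_of_lt (iInf₂_le σ hσ) hlt
  · obtain ⟨σ, ⟨hσ1, hσ2⟩, hlt⟩ := Stmt10Aux.key ν μ hν hμ hmν hmμ hν0 hμ0 h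
    have hmeas : Measurable fun p : ℝ × ℝ => ENNReal.ofReal (‖p.1 - p.2‖ ^ 2) :=
      ((measurable_fst.sub measurable_snd).norm.pow_const 2).ennreal_ofReal
    have hσ'1 : (σ.map Prod.swap).map Prod.fst = μ := by
      rw [Measure.map_map measurable_fst measurable_swap]
      exact hσ2
    have hσ'2 : (σ.map Prod.swap).map Prod.snd = ν := by
      rw [Measure.map_map measurable_snd measurable_swap]
      exact hσ1
    have hcost' : (∫⁻ p : ℝ × ℝ, ENNReal.ofReal (‖p.1 - p.2‖ ^ 2) ∂(σ.map Prod.swap))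
        = ∫⁻ p : ℝ × ℝ, ENNReal.ofReal (‖p.1 - p.2‖ ^ 2) ∂σ := by
      rw [lintegral_map hmeas measurable_swap]
      refine lintegral_congr fun p => ?_
      show ENNReal.ofReal (‖p.2 - p.1‖ ^ 2) = ENNReal.ofReal (‖p.1 - p.2‖ ^ 2)
      rw [norm_sub_rev]
    have := lt_of_le_of_lt (le_of_eq hcost') hlt
    rw [add_comm (∫ y, y ^ 2 ∂ν)] at this
    exact lt_of_le_of_lt (iInf₂_le (σ.map Prod.swap) ⟨hσ'1, hσ'2⟩) this

end
end

section
/- For probability measures μ, ν on ℝ^d with finite second moments, neither equal to δ_0, the comparison angle ∠(μ,ν) := arccos((W₂(δ_0,μ)² + W₂(δ_0,ν)² - W₂(μ,ν)²)/(2W₂(δ_0,μ)W₂(δ_0,ν))) satisfies ∠(μ,ν) ≥ θ(μ,ν), where θ(μ,ν) is the smallest principal angle between span(supp(μ)) and span(supp(ν)). -/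
open MeasureTheory Real ENNReal

noncomputable section

lemma msupp_isClosed {α : Type*} [TopologicalSpace α] [MeasurableSpace α] (μ : Measure α) :
    IsClosed (msupp μ) := by
  rw [← isOpen_compl_iff, isOpen_iff_forall_mem_open]
  intro x hx
  simp only [msupp, Set.mem_compl_iff, Set.mem_setOf_eq, not_forall] at hx
  obtain ⟨U, hU, hxU, hμU⟩ := hx
  refine ⟨U, fun y hy => ?_, hU, hxU⟩
  simp only [msupp, Set.mem_compl_iff, Set.mem_setOf_eq, not_forall]
  exact ⟨U, hU, hy, hμU⟩

lemma msupp_compl_null {α : Type*} [TopologicalSpace α] [SecondCountableTopology α]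
    [MeasurableSpace α] (μ : Measure α) : μ (msupp μ)ᶜ = 0 := by
  set S : Set (Set α) := {U | IsOpen U ∧ μ U = 0} with hS
  obtain ⟨T, hTc, hTS, hT⟩ := TopologicalSpace.isOpen_sUnion_countable S (fun s hs => hs.1)
  have hsub : (msupp μ)ᶜ ⊆ ⋃₀ T := by
    rw [hT]
    intro x hx
    simp only [msupp, Set.mem_compl_iff, Set.mem_setOf_eq, not_forall] at hx
    obtain ⟨U, hU, hxU, hμU⟩ := hx
    exact ⟨U, ⟨hU, by simpa using hμU⟩, hxU⟩
  refine measure_mono_null hsub ?_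
  exact (measure_sUnion_null_iff hTc).2 fun s hs => (hTS hs).2

lemma eq_dirac_zero {d : ℕ} (μ : Measure (Euc d)) [IsProbabilityMeasure μ]
    (h : μ {(0 : Euc d)}ᶜ = 0) : μ = Measure.dirac 0 := by
  ext s hs
  rw [Measure.dirac_apply' _ hs]
  by_cases h0 : (0 : Euc d) ∈ s
  · rw [Set.indicator_of_mem h0]
    have hsc : μ sᶜ = 0 := measure_mono_null (by simpa using h0 : sᶜ ⊆ {(0:Euc d)}ᶜ) h
    have := prob_compl_eq_zero_iff hs (μ := μ)
    simpa using this.1 hsc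
  · rw [Set.indicator_of_notMem h0]
    exact measure_mono_null (by simpa using h0 : s ⊆ {(0:Euc d)}ᶜ) h

lemma moment_pos {d : ℕ} (μ : Measure (Euc d)) [IsProbabilityMeasure μ]
    (hμ : Integrable (fun x => ‖x‖ ^ 2) μ) (hμ0 : μ ≠ Measure.dirac 0) :
    0 < ∫ x, ‖x‖ ^ 2 ∂μ := by
  rcases lt_or_eq_of_le (integral_nonneg (fun x => by positivity) :
      0 ≤ ∫ x, ‖x‖ ^ 2 ∂μ) with h | h
  · exact h
  exfalso
  have h0 : (fun x : Euc d => ‖x‖ ^ 2) =ᵐ[μ] 0 :=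
    (integral_eq_zero_iff_of_nonneg (fun x => by positivity) hμ).1 h.symm
  have : μ {(0 : Euc d)}ᶜ = 0 := by
    have hsub : {(0 : Euc d)}ᶜ ⊆ {x | ¬ (fun x : Euc d => ‖x‖ ^ 2) x = (0 : Euc d → ℝ) x} := by
      intro x hx
      simp only [Set.mem_setOf_eq, Pi.zero_apply]
      simp only [Set.mem_compl_iff, Set.mem_singleton_iff] at hx
      intro hc
      exact hx (norm_eq_zero.1 (sq_eq_zero_iff.1 hc))
    exact measure_mono_null hsub h0
  exact hμ0 (eq_dirac_zero μ this)

theorem stmt17 {d : ℕ} (μ ν : Measure (Euc d)) [IsProbabilityMeasure μ] [IsProbabilityMeasure ν]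
    (hμ : Integrable (fun x => ‖x‖ ^ 2) μ) (hν : Integrable (fun y => ‖y‖ ^ 2) ν)
    (hμ0 : μ ≠ Measure.dirac 0) (hν0 : ν ≠ Measure.dirac 0)
    (θ : ℝ) (hθ : θ ∈ Set.Icc 0 (π / 2))
    (hcos : Real.cos θ = sSup {r : ℝ | ∃ x ∈ Submodule.span ℝ (msupp μ),
      ∃ y ∈ Submodule.span ℝ (msupp ν), x ≠ 0 ∧ y ≠ 0 ∧ r = inner ℝ x y / (‖x‖ * ‖y‖)}) :
    Real.arccos (((∫ x, ‖x‖ ^ 2 ∂μ) + (∫ y, ‖y‖ ^ 2 ∂ν) - (W2sq μ ν).toReal)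
      / (2 * Real.sqrt (∫ x, ‖x‖ ^ 2 ∂μ) * Real.sqrt (∫ y, ‖y‖ ^ 2 ∂ν))) ≥ θ := by
  have pi_pos := Real.pi_pos
  set A := ∫ x, ‖x‖ ^ 2 ∂μ with hA_def
  set B := ∫ y, ‖y‖ ^ 2 ∂ν with hB_def
  have hA : 0 < A := moment_pos μ hμ hμ0
  have hB : 0 < B := moment_pos ν hν hν0
  have hcos0 : 0 ≤ Real.cos θ :=
    Real.cos_nonneg_of_mem_Icc ⟨by linarith [hθ.1], hθ.2⟩
  have hcos1 : Real.cos θ ≤ 1 := Real.cos_le_one θ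
  -- pointwise bound on the support
  have key : ∀ x ∈ msupp μ, ∀ y ∈ msupp ν,
      (inner ℝ x y : ℝ) ≤ Real.cos θ * (‖x‖ * ‖y‖) := by
    intro x hx y hy
    by_cases hx0 : x = 0
    · simp [hx0]
    by_cases hy0 : y = 0
    · simp [hy0]
    have hnx : 0 < ‖x‖ := norm_pos_iff.2 hx0
    have hny : 0 < ‖y‖ := norm_pos_iff.2 hy0
    have hbdd : BddAbove {r : ℝ | ∃ x ∈ Submodule.span ℝ (msupp μ),
        ∃ y ∈ Submodule.span ℝ (msupp ν), x ≠ 0 ∧ y ≠ 0 ∧ r = inner ℝ x y / (‖x‖ * ‖y‖)} := by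
      refine ⟨1, fun r hr => ?_⟩
      obtain ⟨a, -, b, -, ha0, hb0, hr⟩ := hr
      have hna : 0 < ‖a‖ := norm_pos_iff.2 ha0
      have hnb : 0 < ‖b‖ := norm_pos_iff.2 hb0
      rw [hr, div_le_one (by positivity)]
      exact real_inner_le_norm a b
    have hmem : (inner ℝ x y : ℝ) / (‖x‖ * ‖y‖) ∈ {r : ℝ | ∃ x ∈ Submodule.span ℝ (msupp μ),
        ∃ y ∈ Submodule.span ℝ (msupp ν), x ≠ 0 ∧ y ≠ 0 ∧ r = inner ℝ x y / (‖x‖ * ‖y‖)} :=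
      ⟨x, Submodule.subset_span hx, y, Submodule.subset_span hy, hx0, hy0, rfl⟩
    have hle : (inner ℝ x y : ℝ) / (‖x‖ * ‖y‖) ≤ Real.cos θ := by
      rw [hcos]; exact le_csSup hbdd hmem
    calc (inner ℝ x y : ℝ) = ((inner ℝ x y : ℝ) / (‖x‖ * ‖y‖)) * (‖x‖ * ‖y‖) := by
          field_simp
      _ ≤ Real.cos θ * (‖x‖ * ‖y‖) := by
          apply mul_le_mul_of_nonneg_right hle (by positivity)
  -- the target constant
  set C := A + B - 2 * Real.cos θ * (Real.sqrt A * Real.sqrt B) with hC_def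
  -- lower bound on W2sq
  have hW_lb : ENNReal.ofReal C ≤ W2sq μ ν := by
    refine le_iInf₂ fun σ hσ => ?_
    obtain ⟨hσ1, hσ2⟩ := hσ
    have hfst : ∀ᵐ p : Euc d × Euc d ∂σ, p.1 ∈ msupp μ := by
      rw [ae_iff]
      have : {p : Euc d × Euc d | ¬ p.1 ∈ msupp μ} = Prod.fst ⁻¹' (msupp μ)ᶜ := rfl
      rw [this, ← Measure.map_apply measurable_fst (msupp_isClosed μ).measurableSet.compl, hσ1]
      exact msupp_compl_null μ
    have hsnd : ∀ᵐ p : Euc d × Euc d ∂σ, p.2 ∈ msupp ν := by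
      rw [ae_iff]
      have : {p : Euc d × Euc d | ¬ p.2 ∈ msupp ν} = Prod.snd ⁻¹' (msupp ν)ᶜ := rfl
      rw [this, ← Measure.map_apply measurable_snd (msupp_isClosed ν).measurableSet.compl, hσ2]
      exact msupp_compl_null ν
    -- integrability
    have casm : AEStronglyMeasurable (fun x : Euc d => ‖x‖ ^ 2) (σ.map Prod.fst) :=
      (continuous_norm.pow 2).aestronglyMeasurable
    have casm2 : AEStronglyMeasurable (fun x : Euc d => ‖x‖ ^ 2) (σ.map Prod.snd) :=
      (continuous_norm.pow 2).aestronglyMeasurable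
    have h1 : Integrable (fun p : Euc d × Euc d => ‖p.1‖ ^ 2) σ := by
      have h := hμ; rw [← hσ1] at h
      exact (integrable_map_measure casm measurable_fst.aemeasurable).1 h
    have h2 : Integrable (fun p : Euc d × Euc d => ‖p.2‖ ^ 2) σ := by
      have h := hν; rw [← hσ2] at h
      exact (integrable_map_measure casm2 measurable_snd.aemeasurable).1 h
    have h3 : Integrable (fun p : Euc d × Euc d => ‖p.1‖ * ‖p.2‖) σ := by
      refine (h1.add h2).mono
        ((continuous_fst.norm.mul continuous_snd.norm).aestronglyMeasurable) ?_
      filter_upwards with p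
      have h := norm_nonneg p.1
      have h' := norm_nonneg p.2
      simp only [Pi.add_apply]
      rw [Real.norm_of_nonneg (by positivity), Real.norm_of_nonneg (by positivity)]
      nlinarith [sq_nonneg (‖p.1‖ - ‖p.2‖)]
    have hIA : ∫ p : Euc d × Euc d, ‖p.1‖ ^ 2 ∂σ = A := by
      rw [hA_def, ← hσ1, integral_map measurable_fst.aemeasurable casm]
    have hIB : ∫ p : Euc d × Euc d, ‖p.2‖ ^ 2 ∂σ = B := by
      rw [hB_def, ← hσ2, integral_map measurable_snd.aemeasurable casm2]
    -- Cauchy-Schwarz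
    have hCS : ∫ p : Euc d × Euc d, ‖p.1‖ * ‖p.2‖ ∂σ ≤ Real.sqrt A * Real.sqrt B := by
      have hpq : (2 : ℝ).HolderConjugate 2 := Real.HolderConjugate.two_two
      have hf : MemLp (fun p : Euc d × Euc d => ‖p.1‖) (ENNReal.ofReal 2) σ := by
        rw [show ENNReal.ofReal 2 = 2 by norm_num]
        exact (memLp_two_iff_integrable_sq
          continuous_fst.norm.aestronglyMeasurable).2 h1
      have hg : MemLp (fun p : Euc d × Euc d => ‖p.2‖) (ENNReal.ofReal 2) σ := by
        rw [show ENNReal.ofReal 2 = 2 by norm_num]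
        exact (memLp_two_iff_integrable_sq
          continuous_snd.norm.aestronglyMeasurable).2 h2
      have := integral_mul_le_Lp_mul_Lq_of_nonneg hpq
        (Filter.Eventually.of_forall fun p => norm_nonneg _)
        (Filter.Eventually.of_forall fun p => norm_nonneg _) hf hg
      have e1 : ∫ p : Euc d × Euc d, ‖p.1‖ ^ (2:ℝ) ∂σ = A := by
        rw [← hIA]; congr 1; ext p; rw [← Real.rpow_natCast ‖p.1‖ 2]; norm_num
      have e2 : ∫ p : Euc d × Euc d, ‖p.2‖ ^ (2:ℝ) ∂σ = B := by
        rw [← hIB]; congr 1; ext p; rw [← Real.rpow_natCast ‖p.2‖ 2]; norm_num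
      rw [e1, e2] at this
      calc ∫ p : Euc d × Euc d, ‖p.1‖ * ‖p.2‖ ∂σ ≤ A ^ (1/(2:ℝ)) * B ^ (1/(2:ℝ)) := this
        _ = Real.sqrt A * Real.sqrt B := by
            rw [Real.sqrt_eq_rpow, Real.sqrt_eq_rpow]
    -- the comparison function
    set g : Euc d × Euc d → ℝ :=
      fun p => ‖p.1‖ ^ 2 + ‖p.2‖ ^ 2 - 2 * Real.cos θ * (‖p.1‖ * ‖p.2‖) with hg_def
    have hg_int : Integrable g σ := (h1.add h2).sub (h3.const_mul _)
    have hg_nn : 0 ≤ᵐ[σ] g := by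
      filter_upwards with p
      have h := norm_nonneg p.1
      have h' := norm_nonneg p.2
      simp only [hg_def, Pi.zero_apply]
      nlinarith [mul_nonneg h h', sq_nonneg (‖p.1‖ - ‖p.2‖), hcos0, hcos1]
    have hg_le : ∀ᵐ p : Euc d × Euc d ∂σ, g p ≤ ‖p.1 - p.2‖ ^ 2 := by
      filter_upwards [hfst, hsnd] with p hp1 hp2
      have hk := key p.1 hp1 p.2 hp2
      have : ‖p.1 - p.2‖ ^ 2 = ‖p.1‖ ^ 2 - 2 * (inner ℝ p.1 p.2 : ℝ) + ‖p.2‖ ^ 2 :=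
        norm_sub_sq_real p.1 p.2
      simp only [hg_def]
      linarith
    have hCg : C ≤ ∫ p, g p ∂σ := by
      have : ∫ p, g p ∂σ = A + B - 2 * Real.cos θ * ∫ p : Euc d × Euc d, ‖p.1‖ * ‖p.2‖ ∂σ := by
        have h12 : Integrable (fun p : Euc d × Euc d => ‖p.1‖ ^ 2 + ‖p.2‖ ^ 2) σ := h1.add h2
        have h3' : Integrable
            (fun p : Euc d × Euc d => 2 * Real.cos θ * (‖p.1‖ * ‖p.2‖)) σ := h3.const_mul _
        simp only [hg_def]
        rw [integral_sub h12 h3', integral_add h1 h2, hIA, hIB, integral_const_mul]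
      rw [this, hC_def]
      have : Real.cos θ * ∫ p : Euc d × Euc d, ‖p.1‖ * ‖p.2‖ ∂σ
          ≤ Real.cos θ * (Real.sqrt A * Real.sqrt B) := mul_le_mul_of_nonneg_left hCS hcos0
      linarith
    calc ENNReal.ofReal C ≤ ENNReal.ofReal (∫ p, g p ∂σ) := ENNReal.ofReal_le_ofReal hCg
      _ = ∫⁻ p, ENNReal.ofReal (g p) ∂σ := ofReal_integral_eq_lintegral_ofReal hg_int hg_nn
      _ ≤ ∫⁻ p : Euc d × Euc d, ENNReal.ofReal (‖p.1 - p.2‖ ^ 2) ∂σ := by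
          refine lintegral_mono_ae ?_
          filter_upwards [hg_le] with p hp using ENNReal.ofReal_le_ofReal hp
  -- finiteness of W2sq
  have hW_ne_top : W2sq μ ν ≠ ⊤ := by
    have hprod : (μ.prod ν) ∈ Couplings μ ν := by
      constructor
      · rw [Measure.map_fst_prod]; simp
      · rw [Measure.map_snd_prod]; simp
    have hle : W2sq μ ν ≤ ∫⁻ p : Euc d × Euc d, ENNReal.ofReal (‖p.1 - p.2‖ ^ 2) ∂(μ.prod ν) :=
      iInf₂_le _ hprod
    have hbound : ∫⁻ p : Euc d × Euc d, ENNReal.ofReal (‖p.1 - p.2‖ ^ 2) ∂(μ.prod ν)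
        ≤ (∫⁻ p : Euc d × Euc d, ENNReal.ofReal (2 * ‖p.1‖ ^ 2) ∂(μ.prod ν))
          + ∫⁻ p : Euc d × Euc d, ENNReal.ofReal (2 * ‖p.2‖ ^ 2) ∂(μ.prod ν) := by
      rw [← lintegral_add_left ((show Measurable fun p : Euc d × Euc d => ‖p.1‖ ^ 2 from (continuous_fst.norm.pow 2).measurable).const_mul 2).ennreal_ofReal]
      refine lintegral_mono fun p => ?_
      rw [← ENNReal.ofReal_add (by positivity) (by positivity)]
      refine ENNReal.ofReal_le_ofReal ?_
      have h := norm_sub_le p.1 p.2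
      nlinarith [norm_nonneg p.1, norm_nonneg p.2, norm_nonneg (p.1 - p.2),
        mul_self_le_mul_self (norm_nonneg (p.1 - p.2)) h, sq_nonneg (‖p.1‖ - ‖p.2‖)]
    have e1 : ∫⁻ p : Euc d × Euc d, ENNReal.ofReal (2 * ‖p.1‖ ^ 2) ∂(μ.prod ν)
        = ∫⁻ x, ENNReal.ofReal (2 * ‖x‖ ^ 2) ∂μ := by
      have hmap : (μ.prod ν).map Prod.fst = μ := by rw [Measure.map_fst_prod]; simp
      have h := lintegral_map (μ := μ.prod ν) (g := Prod.fst)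
        ((continuous_norm.pow 2).measurable.const_mul 2).ennreal_ofReal measurable_fst
      rw [hmap] at h
      exact h.symm
    have e2 : ∫⁻ p : Euc d × Euc d, ENNReal.ofReal (2 * ‖p.2‖ ^ 2) ∂(μ.prod ν)
        = ∫⁻ y, ENNReal.ofReal (2 * ‖y‖ ^ 2) ∂ν := by
      have hmap : (μ.prod ν).map Prod.snd = ν := by rw [Measure.map_snd_prod]; simp
      have h := lintegral_map (μ := μ.prod ν) (g := Prod.snd)
        ((continuous_norm.pow 2).measurable.const_mul 2).ennreal_ofReal measurable_snd
      rw [hmap] at h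
      exact h.symm
    have f1 : ∫⁻ x, ENNReal.ofReal (2 * ‖x‖ ^ 2) ∂μ < ⊤ := (hμ.const_mul 2).lintegral_lt_top
    have f2 : ∫⁻ y, ENNReal.ofReal (2 * ‖y‖ ^ 2) ∂ν < ⊤ := (hν.const_mul 2).lintegral_lt_top
    exact ne_top_of_le_ne_top (by rw [e1, e2] at hbound; exact (lt_of_le_of_lt hbound
      (ENNReal.add_lt_top.2 ⟨f1, f2⟩)).ne) hle
  have hCt : C ≤ (W2sq μ ν).toReal :=
    (ENNReal.ofReal_le_iff_le_toReal hW_ne_top).1 hW_lb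
  -- conclude
  set t := (W2sq μ ν).toReal with ht_def
  have hden : 0 < 2 * Real.sqrt A * Real.sqrt B := by positivity
  have hexpr : (A + B - t) / (2 * Real.sqrt A * Real.sqrt B) ≤ Real.cos θ := by
    rw [div_le_iff₀ hden]
    have : A + B - t ≤ A + B - C := by linarith
    calc A + B - t ≤ 2 * Real.cos θ * (Real.sqrt A * Real.sqrt B) := by
          rw [hC_def] at this; linarith
      _ = Real.cos θ * (2 * Real.sqrt A * Real.sqrt B) := by ring
  have hθeq : θ = Real.arccos (Real.cos θ) :=
    (Real.arccos_cos hθ.1 (by linarith [hθ.2])).symm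
  rw [ge_iff_le, hθeq]
  unfold Real.arccos
  have := Real.monotone_arcsin hexpr
  linarith
end
end
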